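/- For every graph G that is an induced subgraph of D_m for some m ≥ 1, there exists an integer t = t(G) such that for every n ≥ t, every factor of D_n on at least t vertices contains G as an induced subgraph. -/

import Mathlib

open SimpleGraph

/-- Vertices of the graph `D_n`: the integers `1, …, n`. -/
abbrev DVert (n : ℕ) := {i : ℕ // 1 ≤ i ∧ i ≤ n}

/-- The power graph `D_n` on vertex set `{1, …, n}`: two distinct vertices `i`, `j` are
adjacent iff `|i − j| = 1` (a path edge) or the 2-adic valuations of `i` and `j` agree
(a clique edge).  Here `padicValNat 2 i` is the largest `k` with `2^k ∣ i`. -/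
def Dgraph (n : ℕ) : SimpleGraph (DVert n) :=
  SimpleGraph.fromRel (fun x y =>
    (x : ℕ) + 1 = (y : ℕ) ∨ padicValNat 2 (x : ℕ) = padicValNat 2 (y : ℕ))

/-- Shifting by a multiple of `2^m` preserves the 2-adic valuation of `i ∈ [1, m]`. -/
lemma val_shift (m i q : ℕ) (h1 : 1 ≤ i) (h2 : i ≤ m) :
    padicValNat 2 (i + 2 ^ m * q) = padicValNat 2 i := by
  haveI : Fact (Nat.Prime 2) := ⟨Nat.prime_two⟩
  set k := padicValNat 2 i with hk
  have hi0 : i ≠ 0 := by omega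
  have hdvd : 2 ^ k ∣ i := pow_padicValNat_dvd
  have hndvd : ¬ 2 ^ (k + 1) ∣ i := pow_succ_padicValNat_not_dvd hi0
  have hkm : k + 1 ≤ m := by
    by_contra h
    have : 2 ^ k ≤ i := Nat.le_of_dvd (by omega) hdvd
    have h2m : 2 ^ m ≤ 2 ^ k := Nat.pow_le_pow_right (by norm_num) (by omega)
    have : i < 2 ^ m := lt_of_le_of_lt h2 Nat.lt_two_pow_self
    omega
  have hsk : 2 ^ (k + 1) ∣ 2 ^ m * q :=
    Dvd.dvd.mul_right (pow_dvd_pow 2 hkm) q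
  have hdvd' : 2 ^ k ∣ i + 2 ^ m * q :=
    Dvd.dvd.add hdvd ((pow_dvd_pow 2 (by omega)).trans hsk)
  have hndvd' : ¬ 2 ^ (k + 1) ∣ i + 2 ^ m * q := by
    intro h
    exact hndvd ((Nat.dvd_add_right hsk).mp (by rwa [Nat.add_comm i (2 ^ m * q)] at h))
  have hne : i + 2 ^ m * q ≠ 0 := by omega
  have h1' : k ≤ padicValNat 2 (i + 2 ^ m * q) :=
    (padicValNat_dvd_iff_le hne).mp hdvd'
  have h2' : padicValNat 2 (i + 2 ^ m * q) < k + 1 := by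
    by_contra h
    exact hndvd' ((padicValNat_dvd_iff_le hne).mpr (by omega))
  omega

/-- For every graph `G` that is an induced subgraph of `D_m` for some
`m ≥ 1`, there is `t = t(G)` such that for every `n ≥ t`, every factor of `D_n`
on at least `t` vertices (the subgraph induced by an interval `{a, …, b} ⊆ {1, …, n}`
with `b + 1 − a ≥ t`) contains `G` as an induced subgraph. -/
theorem stmt13 {V : Type} [Fintype V] (G : SimpleGraph V) (m : ℕ) (hm : 1 ≤ m)
    (hG : Nonempty (G ↪g Dgraph m)) :
    ∃ t : ℕ, ∀ n : ℕ, t ≤ n → ∀ a b : ℕ, 1 ≤ a → b ≤ n → a + t ≤ b + 1 →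
      ∃ f : G ↪g Dgraph n, ∀ v : V, a ≤ ((f v : DVert n) : ℕ) ∧ ((f v : DVert n) : ℕ) ≤ b := by
  obtain ⟨f⟩ := hG
  set d : ℕ := 2 ^ m with hd
  have hd0 : 0 < d := Nat.two_pow_pos m
  refine ⟨d + m, fun n hn a b ha hb hab => ?_⟩
  -- choose the shift s : smallest multiple of d that is ≥ a - 1
  set c : ℕ := a - 1 with hc
  set s : ℕ := d * ((c + d - 1) / d) with hs
  have hdm : d * ((c + d - 1) / d) + (c + d - 1) % d = c + d - 1 := Nat.div_add_mod _ _
  have hmod : (c + d - 1) % d < d := Nat.mod_lt _ hd0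
  have hcs : c ≤ s := by omega
  have hsb : s + m ≤ b := by omega
  -- bounds for a shifted vertex
  have hbound : ∀ x : DVert m, 1 ≤ (x : ℕ) + s ∧ (x : ℕ) + s ≤ n := by
    intro x
    have := x.2
    constructor <;> omega
  refine ⟨⟨⟨fun v => ⟨(f v : ℕ) + s, hbound (f v)⟩, ?_⟩, ?_⟩, ?_⟩
  · intro u v huv
    have : (f u : ℕ) + s = (f v : ℕ) + s := congrArg Subtype.val huv
    have : (f u : ℕ) = (f v : ℕ) := by omega
    exact f.injective (Subtype.ext this)
  · intro u v
    rw [← f.map_rel_iff]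
    set x := f u with hx
    set y := f v with hy
    have hxv := x.2
    have hyv := y.2
    have hxval : padicValNat 2 ((x : ℕ) + s) = padicValNat 2 (x : ℕ) :=
      val_shift m (x : ℕ) _ hxv.1 hxv.2
    have hyval : padicValNat 2 ((y : ℕ) + s) = padicValNat 2 (y : ℕ) :=
      val_shift m (y : ℕ) _ hyv.1 hyv.2
    show (Dgraph n).Adj ⟨(x : ℕ) + s, _⟩ ⟨(y : ℕ) + s, _⟩ ↔ (Dgraph m).Adj x y
    simp only [Dgraph, fromRel_adj, ne_eq, Subtype.mk.injEq, Subtype.ext_iff, hxval, hyval]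
    constructor
    · rintro ⟨hne, h⟩
      exact ⟨fun hxy => hne (by omega), by omega⟩
    · rintro ⟨hne, h⟩
      exact ⟨fun hxy => hne (by omega), by omega⟩
  · intro v
    have := (f v).2
    show a ≤ (f v : ℕ) + s ∧ (f v : ℕ) + s ≤ b
    constructor <;> omega
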